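/- Let λ be a positive random variable with Var(λ) > 0 and finite second moment, ε ~ N(0, σ²) independent of λ, and λ̂ = λ·e^ε. Then the Pearson correlation between λ̂ and λ equals e^{−σ²/2} / sqrt((1 + CV⁻²) − CV⁻²·e^{−σ²}), where CV = sqrt(Var(λ))/E[λ]. -/

import Mathlib

open MeasureTheory ProbabilityTheory

lemma gaussianPDFReal_mul_exp (t : ℝ) (v : NNReal) (x : ℝ) :
    gaussianPDFReal 0 v x * Real.exp (t * x)
      = Real.exp ((v : ℝ) * t ^ 2 / 2) * gaussianPDFReal (t * v) v x := by
  rcases eq_or_ne v 0 with h | h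
  · simp [h]
  · have hv : (0 : ℝ) < v := lt_of_le_of_ne v.coe_nonneg (by exact_mod_cast h.symm)
    simp only [gaussianPDFReal]
    rw [mul_assoc, ← Real.exp_add,
      show Real.exp ((v : ℝ) * t ^ 2 / 2) * ((Real.sqrt (2 * Real.pi * v))⁻¹ *
          Real.exp (-(x - t * v) ^ 2 / (2 * v)))
        = (Real.sqrt (2 * Real.pi * v))⁻¹ *
          Real.exp ((v : ℝ) * t ^ 2 / 2 + -(x - t * v) ^ 2 / (2 * v)) by
        rw [Real.exp_add]; ring]
    congr 1
    field_simp
    ring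

lemma integrable_exp_mul_gaussianReal (t : ℝ) (v : NNReal) :
    Integrable (fun x => Real.exp (t * x)) (gaussianReal 0 v) := by
  rcases eq_or_ne v 0 with h | h
  · rw [h, gaussianReal_zero_var]
    refine (integrable_const (Real.exp (t * 0))).congr ?_
    rw [Filter.EventuallyEq, ae_dirac_eq]
    exact Filter.eventually_pure.mpr rfl
  · rw [gaussianReal_of_var_ne_zero _ h,
      show gaussianPDF 0 v = fun x => ((gaussianPDFReal 0 v x).toNNReal : ENNReal) from rfl,
      integrable_withDensity_iff_integrable_smul
        ((measurable_gaussianPDFReal 0 v).real_toNNReal)]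
    have : (fun x => ((gaussianPDFReal 0 v x).toNNReal : NNReal) • Real.exp (t * x))
        = fun x => Real.exp ((v : ℝ) * t ^ 2 / 2) * gaussianPDFReal (t * v) v x := by
      ext x
      rw [NNReal.smul_def, Real.coe_toNNReal _ (gaussianPDFReal_nonneg 0 v x), smul_eq_mul,
        gaussianPDFReal_mul_exp]
    rw [this]
    exact (integrable_gaussianPDFReal _ _).const_mul _

lemma integral_exp_mul_gaussianReal (t : ℝ) (v : NNReal) :
    ∫ x, Real.exp (t * x) ∂(gaussianReal 0 v) = Real.exp ((v : ℝ) * t ^ 2 / 2) := by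
  rcases eq_or_ne v 0 with h | h
  · rw [h, gaussianReal_zero_var]; simp
  · rw [gaussianReal_of_var_ne_zero _ h,
      show gaussianPDF 0 v = fun x => ((gaussianPDFReal 0 v x).toNNReal : ENNReal) from rfl,
      integral_withDensity_eq_integral_smul
        ((measurable_gaussianPDFReal 0 v).real_toNNReal)]
    have : (fun x => ((gaussianPDFReal 0 v x).toNNReal : NNReal) • Real.exp (t * x))
        = fun x => Real.exp ((v : ℝ) * t ^ 2 / 2) * gaussianPDFReal (t * v) v x := by
      ext x
      rw [NNReal.smul_def, Real.coe_toNNReal _ (gaussianPDFReal_nonneg 0 v x), smul_eq_mul,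
        gaussianPDFReal_mul_exp]
    rw [this, integral_const_mul, integral_gaussianPDFReal_eq_one _ h, mul_one]

lemma integral_exp_eps {Ω : Type*} [MeasurableSpace Ω] (μ : Measure Ω) (ε : Ω → ℝ)
    (v : NNReal) (hε : Measurable ε) (hlaw : Measure.map ε μ = gaussianReal 0 v) (t : ℝ) :
    ∫ ω, Real.exp (t * ε ω) ∂μ = Real.exp ((v : ℝ) * t ^ 2 / 2) := by
  rw [← integral_exp_mul_gaussianReal t v, ← hlaw,
    integral_map hε.aemeasurable
      ((by fun_prop : Measurable fun x : ℝ => Real.exp (t * x)).aestronglyMeasurable)]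

lemma integrable_exp_eps {Ω : Type*} [MeasurableSpace Ω] (μ : Measure Ω) (ε : Ω → ℝ)
    (v : NNReal) (hε : Measurable ε) (hlaw : Measure.map ε μ = gaussianReal 0 v) (t : ℝ) :
    Integrable (fun ω => Real.exp (t * ε ω)) μ := by
  have h := integrable_exp_mul_gaussianReal t v
  rw [← hlaw] at h
  exact (integrable_map_measure
    ((by fun_prop : Measurable fun x : ℝ => Real.exp (t * x)).aestronglyMeasurable)
    hε.aemeasurable).mp h

lemma corr_algebra (V m v : ℝ) (hV : 0 < V) (hm : 0 < m) (hv : 0 ≤ v) :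
    ((V + m ^ 2) * Real.exp (v / 2) - m * Real.exp (v / 2) * m)
        / (Real.sqrt ((V + m ^ 2) * Real.exp (2 * v) - (m * Real.exp (v / 2)) ^ 2)
            * Real.sqrt V)
      = Real.exp (-v / 2)
        / Real.sqrt ((1 + (V / m ^ 2)⁻¹) - (V / m ^ 2)⁻¹ * Real.exp (-v)) := by
  set a := Real.exp (v / 2) with ha
  have ha0 : 0 < a := Real.exp_pos _
  have ha1 : 1 ≤ a := Real.one_le_exp (by linarith)
  have h2v : Real.exp (2 * v) = a ^ 4 := by
    rw [ha, show (2 : ℝ) * v = v / 2 + v / 2 + (v / 2 + v / 2) by ring, Real.exp_add,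
      Real.exp_add]
    ring
  have hnegv : Real.exp (-v) = (a ^ 2)⁻¹ := by
    rw [Real.exp_neg, ha, show v = v / 2 + v / 2 by ring, Real.exp_add]
    ring_nf
  have hneg2 : Real.exp (-v / 2) = a⁻¹ := by
    rw [show -v / 2 = -(v / 2) by ring, Real.exp_neg, ha]
  set W := V + m ^ 2 * (1 - (a ^ 2)⁻¹) with hW
  have hW0 : 0 < W := by
    have h1 : (a ^ 2)⁻¹ ≤ 1 := by
      rw [inv_le_one_iff₀]
      right; nlinarith
    have h2 : 0 ≤ m ^ 2 * (1 - (a ^ 2)⁻¹) := mul_nonneg (sq_nonneg m) (by linarith)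
    rw [hW]
    linarith
  have harg1 : (V + m ^ 2) * a ^ 4 - (m * a) ^ 2 = a ^ 4 * W := by
    rw [hW]; field_simp; ring
  have hsq1 : Real.sqrt ((V + m ^ 2) * a ^ 4 - (m * a) ^ 2) = a ^ 2 * Real.sqrt W := by
    rw [harg1, show a ^ 4 = (a ^ 2) ^ 2 by ring, Real.sqrt_mul (sq_nonneg _),
      Real.sqrt_sq (sq_nonneg a)]
  have harg2 : (1 + (V / m ^ 2)⁻¹) - (V / m ^ 2)⁻¹ * (a ^ 2)⁻¹ = W / V := by
    rw [hW]; field_simp; ring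
  rw [h2v, hnegv, hneg2, hsq1, harg2, Real.sqrt_div hW0.le,
    show (V + m ^ 2) * a - m * a * m = V * a by ring]
  have hsV : 0 < Real.sqrt V := Real.sqrt_pos.mpr hV
  have hsW : 0 < Real.sqrt W := Real.sqrt_pos.mpr hW0
  have hVs : V = Real.sqrt V * Real.sqrt V := (Real.mul_self_sqrt hV.le).symm
  field_simp
  nth_rewrite 1 [hVs]
  ring

/-- The Pearson correlation between predicted losses `λ̂ = λ·e^ε` and actual losses `λ`,
with `ε ~ N(0, σ²)` independent of `λ`, equals
`e^{−σ²/2} / sqrt((1 + CV⁻²) − CV⁻²·e^{−σ²})` where `CV = sqrt(Var λ)/E[λ]`. -/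
theorem corr_lambdaHat_lambda
    {Ω : Type*} [MeasurableSpace Ω] (μ : Measure Ω) [IsProbabilityMeasure μ]
    (lam ε : Ω → ℝ) (v : NNReal)
    (hlam_meas : Measurable lam) (hε_meas : Measurable ε)
    (hlam_pos : ∀ᵐ ω ∂μ, 0 < lam ω)
    (hlam_sq : Integrable (fun ω => (lam ω) ^ 2) μ)
    (hvar_pos : 0 < variance lam μ)
    (hε_law : Measure.map ε μ = gaussianReal 0 v)
    (hindep : IndepFun lam ε μ)
    (lamHat : Ω → ℝ) (hlamHat : lamHat = fun ω => lam ω * Real.exp (ε ω))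
    (CV : ℝ) (hCV : CV = Real.sqrt (variance lam μ) / (∫ ω, lam ω ∂μ)) :
    ((∫ ω, lamHat ω * lam ω ∂μ) - (∫ ω, lamHat ω ∂μ) * (∫ ω, lam ω ∂μ))
        / (Real.sqrt (variance lamHat μ) * Real.sqrt (variance lam μ))
      = Real.exp (-(v : ℝ) / 2)
        / Real.sqrt ((1 + (CV ^ 2)⁻¹) - (CV ^ 2)⁻¹ * Real.exp (-(v : ℝ))) := by
  have hv0 : (0 : ℝ) ≤ v := v.coe_nonneg
  -- basic notation
  set m := ∫ ω, lam ω ∂μ with hm_def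
  set V := variance lam μ with hV_def
  -- integrability of lam
  have hlam_mem : MemLp lam 2 μ :=
    (memLp_two_iff_integrable_sq hlam_meas.aestronglyMeasurable).mpr hlam_sq
  have hlam_int : Integrable lam μ := hlam_mem.integrable one_le_two
  -- exponential moments
  have hE1 : ∫ ω, Real.exp (ε ω) ∂μ = Real.exp ((v : ℝ) / 2) := by
    have h := integral_exp_eps μ ε v hε_meas hε_law 1
    simpa using h
  have hE2 : ∫ ω, Real.exp (2 * ε ω) ∂μ = Real.exp (2 * (v : ℝ)) := by
    rw [integral_exp_eps μ ε v hε_meas hε_law 2]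
    norm_num
    ring_nf
  have hIexp1 : Integrable (fun ω => Real.exp (ε ω)) μ := by
    simpa using integrable_exp_eps μ ε v hε_meas hε_law 1
  have hIexp2 : Integrable (fun ω => Real.exp (2 * ε ω)) μ :=
    integrable_exp_eps μ ε v hε_meas hε_law 2
  -- independence facts
  have hind1 : IndepFun lam (fun ω => Real.exp (ε ω)) μ :=
    hindep.comp measurable_id Real.measurable_exp
  have hind2 : IndepFun (fun ω => lam ω ^ 2) (fun ω => Real.exp (ε ω)) μ :=
    hindep.comp (measurable_id.pow_const 2) Real.measurable_exp
  have hind3 : IndepFun (fun ω => lam ω ^ 2) (fun ω => Real.exp (2 * ε ω)) μ :=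
    hindep.comp (measurable_id.pow_const 2)
      (show Measurable fun x : ℝ => Real.exp (2 * x) by fun_prop)
  -- E[lam] is positive
  have hnn : 0 ≤ᵐ[μ] lam := hlam_pos.mono fun ω h => h.le
  have hm_pos : 0 < m := by
    rcases (integral_nonneg_of_ae hnn).lt_or_eq with h | h
    · exact h
    · exfalso
      have hz : lam =ᵐ[μ] 0 := (integral_eq_zero_iff_of_nonneg_ae hnn hlam_int).mp h.symm
      haveI : (ae μ).NeBot := ae_neBot.mpr (IsProbabilityMeasure.ne_zero μ)
      have hfalse : ∀ᵐ ω ∂μ, False := by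
        filter_upwards [hz, hlam_pos] with ω h1 h2
        simp [h1] at h2
      obtain ⟨ω, hω⟩ := hfalse.exists
      exact hω
  -- second moment of lam
  have hvar := variance_eq_sub hlam_mem
  simp only [Pi.pow_apply] at hvar
  have hS : ∫ ω, lam ω ^ 2 ∂μ = V + m ^ 2 := by
    rw [hV_def, hvar]; ring
  -- integrals involving lamHat
  have hInt_hat : ∫ ω, lamHat ω ∂μ = m * Real.exp ((v : ℝ) / 2) := by
    rw [hlamHat]
    have h : ∫ ω, lam ω * Real.exp (ε ω) ∂μ
        = (∫ ω, lam ω ∂μ) * ∫ ω, Real.exp (ε ω) ∂μ :=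
      hind1.integral_mul_eq_mul_integral hlam_meas.aestronglyMeasurable
        (Real.measurable_exp.comp hε_meas).aestronglyMeasurable
    rw [h, hE1]
  have hInt_hatlam : ∫ ω, lamHat ω * lam ω ∂μ = (V + m ^ 2) * Real.exp ((v : ℝ) / 2) := by
    have h : ∫ ω, lam ω ^ 2 * Real.exp (ε ω) ∂μ
        = (∫ ω, lam ω ^ 2 ∂μ) * ∫ ω, Real.exp (ε ω) ∂μ :=
      hind2.integral_mul_eq_mul_integral (hlam_meas.pow_const 2).aestronglyMeasurable
        (Real.measurable_exp.comp hε_meas).aestronglyMeasurable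
    calc ∫ ω, lamHat ω * lam ω ∂μ = ∫ ω, lam ω ^ 2 * Real.exp (ε ω) ∂μ := by
          rw [hlamHat]
          refine integral_congr_ae (ae_of_all _ fun ω => by ring)
      _ = (V + m ^ 2) * Real.exp ((v : ℝ) / 2) := by rw [h, hE1, hS]
  -- variance of lamHat
  have hhat_sq_eq : ∀ ω, lamHat ω ^ 2 = lam ω ^ 2 * Real.exp (2 * ε ω) := by
    intro ω
    rw [hlamHat]
    simp only
    rw [mul_pow, sq (Real.exp (ε ω)), ← Real.exp_add, two_mul]
  have hhat_meas : AEStronglyMeasurable lamHat μ := by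
    rw [hlamHat]
    exact (hlam_meas.mul (Real.measurable_exp.comp hε_meas)).aestronglyMeasurable
  have hhat_sq_int : Integrable (fun ω => lamHat ω ^ 2) μ := by
    have h : Integrable (fun ω => lam ω ^ 2 * Real.exp (2 * ε ω)) μ :=
      hind3.integrable_mul hlam_sq hIexp2
    exact h.congr (ae_of_all _ fun ω => (hhat_sq_eq ω).symm)
  have hhat_mem : MemLp lamHat 2 μ :=
    (memLp_two_iff_integrable_sq hhat_meas).mpr hhat_sq_int
  have hInt_hat_sq : ∫ ω, lamHat ω ^ 2 ∂μ = (V + m ^ 2) * Real.exp (2 * (v : ℝ)) := by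
    have h : ∫ ω, lam ω ^ 2 * Real.exp (2 * ε ω) ∂μ
        = (∫ ω, lam ω ^ 2 ∂μ) * ∫ ω, Real.exp (2 * ε ω) ∂μ :=
      hind3.integral_mul_eq_mul_integral (hlam_meas.pow_const 2).aestronglyMeasurable
        (show Measurable fun ω => Real.exp (2 * ε ω) by fun_prop).aestronglyMeasurable
    calc ∫ ω, lamHat ω ^ 2 ∂μ = ∫ ω, lam ω ^ 2 * Real.exp (2 * ε ω) ∂μ :=
          integral_congr_ae (ae_of_all _ fun ω => hhat_sq_eq ω)
      _ = (V + m ^ 2) * Real.exp (2 * (v : ℝ)) := by rw [h, hE2, hS]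
  have hVarHat : variance lamHat μ
      = (V + m ^ 2) * Real.exp (2 * (v : ℝ)) - (m * Real.exp ((v : ℝ) / 2)) ^ 2 := by
    have h := variance_eq_sub hhat_mem
    simp only [Pi.pow_apply] at h
    rw [h, hInt_hat_sq, hInt_hat]
  -- CV squared
  have hCVsq : CV ^ 2 = V / m ^ 2 := by
    rw [hCV, div_pow, Real.sq_sqrt hvar_pos.le]
  rw [hInt_hatlam, hInt_hat, hVarHat, hCVsq]
  exact corr_algebra V m (v : ℝ) hvar_pos hm_pos hv0
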